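/- Let G be a cograph on vertex set V partitioned into V₁ and V₂ with |V₁| = ⌈|V|/2⌉ and |V₂| = ⌊|V|/2⌋. Then there exist subsets U₁ ⊆ V₁ and U₂ ⊆ V₂ with |U_i| ≥ |V_i|/4 for i = 1, 2, such that either every vertex of U₁ is adjacent to every vertex of U₂, or no vertex of U₁ is adjacent to any vertex of U₂. -/

import Mathlib

open Finset

/-- `G` is a cograph, i.e. it has no induced path on four vertices. -/
def IsCograph {V : Type*} (G : SimpleGraph V) : Prop :=
  ¬∃ a b c d : V, a ≠ c ∧ a ≠ d ∧ b ≠ d ∧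
    G.Adj a b ∧ G.Adj b c ∧ G.Adj c d ∧ ¬G.Adj a c ∧ ¬G.Adj a d ∧ ¬G.Adj b d

namespace Stmt11

variable {V : Type*} [DecidableEq V]
set_option linter.unusedSectionVars false

/-- no edges between `X` and `Y`. -/
def NAdj (G : SimpleGraph V) (X Y : Finset V) : Prop := ∀ x ∈ X, ∀ y ∈ Y, ¬ G.Adj x y

lemma IsCograph.compl {G : SimpleGraph V} (hG : IsCograph G) : IsCograph Gᶜ := by
  rintro ⟨a, b, c, d, hac, had, hbd, hab, hbc, hcd, nac, nad, nbd⟩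
  apply hG
  simp only [SimpleGraph.compl_adj, not_and, not_not] at hab hbc hcd nac nad nbd
  exact ⟨b, d, a, c, fun h => hab.1 h.symm, hbc.1, fun h => hcd.1 h.symm,
    nbd hbd, (nad had).symm, nac hac,
    fun h => hab.2 h.symm, hbc.2, fun h => hcd.2 h.symm⟩

/-- connectivity within a finite window `W`. -/
def Rel (G : SimpleGraph V) (W : Finset V) : V → V → Prop :=
  Relation.ReflTransGen (fun u v => u ∈ W ∧ v ∈ W ∧ G.Adj u v)

lemma Rel.symm {G : SimpleGraph V} {W : Finset V} {x y : V} (h : Rel G W x y) :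
    Rel G W y x :=
  (@Relation.ReflTransGen.symmetric _ _ ⟨fun _ _ h => ⟨h.2.1, h.1, h.2.2.symm⟩⟩).symm _ _ h

lemma Rel.trans {G : SimpleGraph V} {W : Finset V} {x y z : V}
    (h : Rel G W x y) (h' : Rel G W y z) : Rel G W x z :=
  Relation.ReflTransGen.trans h h'

lemma Rel.mem_right {G : SimpleGraph V} {W : Finset V} {x y : V} (hx : x ∈ W)
    (h : Rel G W x y) : y ∈ W := by
  induction h with
  | refl => exact hx
  | tail _ h2 _ => exact h2.2.1

open Classical in
/-- the connected component of `x` inside window `W`. -/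
noncomputable def cmp (G : SimpleGraph V) (W : Finset V) (x : V) : Finset V :=
  W.filter (Rel G W x)

lemma mem_cmp_self {G : SimpleGraph V} {W : Finset V} {x : V} (hx : x ∈ W) :
    x ∈ cmp G W x := by
  simp [cmp, hx, Rel]
  classical exact mem_filter.2 ⟨hx, Relation.ReflTransGen.refl⟩

lemma cmp_subset {G : SimpleGraph V} {W : Finset V} {x : V} : cmp G W x ⊆ W := by
  intro y hy; simp [cmp] at hy; exact hy.1

lemma mem_cmp_iff {G : SimpleGraph V} {W : Finset V} {x y : V} :
    y ∈ cmp G W x ↔ y ∈ W ∧ Rel G W x y := by simp [cmp]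

lemma cmp_eq_of_mem {G : SimpleGraph V} {W : Finset V} {x y : V}
    (h : y ∈ cmp G W x) : cmp G W y = cmp G W x := by
  rw [mem_cmp_iff] at h
  ext z
  simp only [mem_cmp_iff]
  exact ⟨fun ⟨hz, hr⟩ => ⟨hz, h.2.trans hr⟩, fun ⟨hz, hr⟩ => ⟨hz, h.2.symm.trans hr⟩⟩

lemma adj_mem_cmp {G : SimpleGraph V} {W : Finset V} {x u v : V}
    (hu : u ∈ cmp G W x) (hv : v ∈ W) (h : G.Adj u v) : v ∈ cmp G W x := by
  rw [mem_cmp_iff] at hu ⊢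
  exact ⟨hv, hu.2.trans (Relation.ReflTransGen.single ⟨hu.1, hv, h⟩)⟩


/-! new stuff -/

lemma nadj_of_not_mem_cmp {G : SimpleGraph V} {W : Finset V} {x z : V}
    (hx : x ∈ W) (hz : z ∈ W) (h : z ∉ cmp G W x) : ¬G.Adj x z := fun hadj =>
  h (adj_mem_cmp (mem_cmp_self hx) hz hadj)

lemma rel_mem_side {G : SimpleGraph V} {W X Y : Finset V} (hXY : X ∪ Y = W)
    (hn : NAdj G X Y) {x y : V} (hx : x ∈ X) (h : Rel G W x y) : y ∈ X := by
  induction h with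
  | refl => exact hx
  | tail _ h2 ih =>
    rename_i b c _
    have hc : c ∈ X ∪ Y := hXY ▸ h2.2.1
    rcases mem_union.1 hc with h' | h'
    · exact h'
    · exact absurd h2.2.2 (hn _ ih _ h')

def Disc (G : SimpleGraph V) (W : Finset V) : Prop :=
  ∃ X Y : Finset V, X ∪ Y = W ∧ Disjoint X Y ∧ X.Nonempty ∧ Y.Nonempty ∧ NAdj G X Y

lemma Disc.exists_not_rel {G : SimpleGraph V} {W : Finset V} (h : Disc G W) :
    ∃ x ∈ W, ∃ y ∈ W, ¬Rel G W x y := by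
  obtain ⟨X, Y, hXY, hdisj, ⟨x, hx⟩, ⟨y, hy⟩, hn⟩ := h
  refine ⟨x, hXY ▸ mem_union_left _ hx, y, hXY ▸ mem_union_right _ hy, fun hrel => ?_⟩
  exact (Finset.disjoint_left.1 hdisj (rel_mem_side hXY hn hx hrel)) hy

lemma crossing {G : SimpleGraph V} {W' : Finset V} {v p q : V}
    (h : Rel G W' p q) (hp : G.Adj v p) (hq : ¬G.Adj v q) :
    ∃ y ∈ W', ∃ y' ∈ W', G.Adj y y' ∧ G.Adj v y ∧ ¬G.Adj v y' := by
  induction h with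
  | refl => exact absurd hp hq
  | tail _ h2 ih =>
    rename_i b c _
    by_cases hvb : G.Adj v b
    · exact ⟨b, h2.1, c, h2.2.1, h2.2.2, hvb, hq⟩
    · exact ih hvb

lemma seinsche_step {G : SimpleGraph V} (hG : IsCograph G) {W : Finset V} {v : V}
    (hv : v ∈ W) (hdisc : Disc G (W.erase v)) : Disc G W ∨ Disc Gᶜ W := by
  classical
  set W' := W.erase v with hW'
  have hW'sub : W' ⊆ W := erase_subset _ _
  have hvW' : v ∉ W' := notMem_erase _ _
  obtain ⟨x₀, hx₀, y₀, hy₀, hnr⟩ := hdisc.exists_not_rel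
  by_cases hmix : ∃ p ∈ W', ∃ q ∈ W', Rel G W' p q ∧ G.Adj v p ∧ ¬G.Adj v q
  · -- mixed component case
    obtain ⟨p, hp, q, hq, hrel, hvp, hvq⟩ := hmix
    obtain ⟨y, hy, y', hy', hyy', hvy, hvy'⟩ := crossing hrel hvp hvq
    set K := cmp G W' y with hK
    by_cases hz : ∃ z ∈ W', z ∉ K ∧ G.Adj v z
    · -- induced P4 (z, v, y, y') : contradiction
      exfalso
      obtain ⟨z, hzW, hzK, hvz⟩ := hz
      have hy'K : y' ∈ K := adj_mem_cmp (mem_cmp_self hy) hy' hyy'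
      have hzy : ¬G.Adj z y := fun h => hzK (adj_mem_cmp (mem_cmp_self hy) hzW h.symm)
      have hzy' : ¬G.Adj z y' := fun h => by
        have hzy'm : z ∈ cmp G W' y' := adj_mem_cmp (mem_cmp_self hy') hzW h.symm
        rw [cmp_eq_of_mem (show y' ∈ cmp G W' y from hy'K)] at hzy'm
        exact hzK hzy'm
      refine hG ⟨z, v, y, y', ?_, ?_, ?_, hvz.symm, hvy, hyy', hzy, hzy', hvy'⟩
      · rintro rfl; exact hzK (mem_cmp_self hy)
      · rintro rfl; exact hzK hy'K
      · rintro rfl; exact hvW' hy'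
    · -- all neighbours of v inside W' are in K: split (W \ insert v K, insert v K)
      push_neg at hz
      left
      have hKW : insert v K ⊆ W := insert_subset hv (cmp_subset.trans hW'sub)
      have hw₀ : ∃ w₀ ∈ W', w₀ ∉ K := by
        by_cases hx₀K : x₀ ∈ K
        · refine ⟨y₀, hy₀, fun hy₀K => ?_⟩
          rw [mem_cmp_iff] at hx₀K hy₀K
          exact hnr (hx₀K.2.symm.trans hy₀K.2)
        · exact ⟨x₀, hx₀, hx₀K⟩
      obtain ⟨w₀, hw₀W, hw₀K⟩ := hw₀
      refine ⟨W \ insert v K, insert v K, sdiff_union_of_subset hKW, sdiff_disjoint,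
        ⟨w₀, mem_sdiff.2 ⟨hW'sub hw₀W, fun hm => ?_⟩⟩, ⟨v, mem_insert_self _ _⟩, ?_⟩
      · rcases mem_insert.1 hm with rfl | hm
        · exact hvW' hw₀W
        · exact hw₀K hm
      · intro a ha b hb
        obtain ⟨haW, haK⟩ := mem_sdiff.1 ha
        have haW' : a ∈ W' := mem_erase.2 ⟨fun h => haK (h ▸ mem_insert_self _ _), haW⟩
        rcases mem_insert.1 hb with rfl | hbK
        · exact fun h => (hz a haW' (fun hm => haK (mem_insert_of_mem hm))) h.symm
        · intro h
          exact haK (mem_insert.2 (Or.inr (adj_mem_cmp hbK haW' h.symm)))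
  · -- no mixed component
    push_neg at hmix
    set N := W'.filter (fun z => ¬G.Adj v z) with hN
    by_cases hNe : N.Nonempty
    · left
      have hNW : N ⊆ W := (filter_subset _ _).trans hW'sub
      refine ⟨N, W \ N, union_sdiff_of_subset hNW, disjoint_sdiff, hNe, ⟨v, mem_sdiff.2 ⟨hv, fun hm => hvW' (filter_subset _ _ hm)⟩⟩, ?_⟩
      intro a ha b hb hadj
      obtain ⟨haW', hav⟩ := mem_filter.1 ha
      obtain ⟨hbW, hbN⟩ := mem_sdiff.1 hb
      by_cases hbv : b = v
      · exact hav (hbv ▸ hadj).symm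
      · have hbW' : b ∈ W' := mem_erase.2 ⟨hbv, hbW⟩
        have hvb : G.Adj v b := by
          by_contra hvb
          exact hbN (mem_filter.2 ⟨hbW', hvb⟩)
        exact hav (hmix b hbW' a haW'
          (Relation.ReflTransGen.single ⟨hbW', haW', hadj.symm⟩) hvb)
    · -- v complete to W'
      right
      rw [not_nonempty_iff_eq_empty, filter_eq_empty_iff] at hNe
      refine ⟨{v}, W', ?_, ?_, ⟨v, mem_singleton_self _⟩, ⟨x₀, hx₀⟩, ?_⟩
      · ext w
        simp only [hW', mem_union, mem_singleton, mem_erase]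
        constructor
        · rintro (rfl | ⟨_, hw⟩) <;> [exact hv; exact hw]
        · intro hw
          by_cases hwv : w = v
          · exact Or.inl hwv
          · exact Or.inr ⟨hwv, hw⟩
      · simp [hvW']
      · intro a ha b hb
        rw [mem_singleton] at ha
        subst ha
        simp only [SimpleGraph.compl_adj, not_and, not_not]
        intro _
        by_contra h
        exact (hNe hb) h

theorem seinsche {G : SimpleGraph V} (hG : IsCograph G) {W : Finset V}
    (hW : 2 ≤ W.card) : Disc G W ∨ Disc Gᶜ W := by
  classical
  suffices H : ∀ n (G : SimpleGraph V), IsCograph G → ∀ W : Finset V, W.card = n →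
      2 ≤ W.card → Disc G W ∨ Disc Gᶜ W from H _ G hG W rfl hW
  intro n
  induction n using Nat.strong_induction_on with
  | _ n ih =>
  rintro G hG W rfl hW
  rcases Nat.lt_or_ge W.card 3 with h3 | h3
  · -- |W| = 2
    have h2 : W.card = 2 := le_antisymm (by omega) hW
    obtain ⟨x, hx, y, hy, hxy⟩ := Finset.one_lt_card (s := W) |>.1 (by omega)
    have hWxy : W = {x, y} := by
      refine (Finset.eq_of_subset_of_card_le ?_ ?_).symm
      · intro z hz; rcases mem_insert.1 hz with rfl | hz
        · exact hx
        · exact (mem_singleton.1 hz) ▸ hy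
      · rw [h2, card_insert_of_notMem (by simp [hxy]), card_singleton]
    by_cases hadj : G.Adj x y
    · right
      refine ⟨{x}, {y}, by rw [hWxy]; rfl, by simp [hxy.symm, hxy], singleton_nonempty _,
        singleton_nonempty _, ?_⟩
      intro a ha b hb
      rw [mem_singleton] at ha hb
      subst ha; subst hb
      simp [SimpleGraph.compl_adj, hadj]
    · left
      refine ⟨{x}, {y}, by rw [hWxy]; rfl, by simp [hxy.symm, hxy], singleton_nonempty _,
        singleton_nonempty _, ?_⟩
      intro a ha b hb
      rw [mem_singleton] at ha hb
      subst ha; subst hb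
      exact hadj
  · -- |W| ≥ 3
    obtain ⟨v, hv⟩ := Finset.card_pos (s := W) |>.1 (by omega)
    have hcard : (W.erase v).card = W.card - 1 := card_erase_of_mem hv
    have hlt : (W.erase v).card < W.card := by omega
    have h2' : 2 ≤ (W.erase v).card := by omega
    rcases ih _ hlt G hG _ rfl h2' with hd | hd
    · exact seinsche_step hG hv hd
    · rcases seinsche_step (IsCograph.compl hG) hv hd with hd' | hd'
      · exact Or.inr hd'
      · rw [compl_compl] at hd'
        exact Or.inl hd'

section Generic
open List
variable {X : Type*} [DecidableEq X]

/-- ratio order: `β x / α x ≤ β y / α y`. -/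
def rr (α β : X → ℕ) (x y : X) : Prop := β x * α y ≤ α x * β y

lemma rr_refl (α β : X → ℕ) (x : X) : rr α β x x := by unfold rr; rw [Nat.mul_comm]

lemma rr_total (α β : X → ℕ) (x y : X) : rr α β x y ∨ rr α β y x := by
  unfold rr
  rcases Nat.le_total (β x * α y) (α x * β y) with h | h
  · exact Or.inl h
  · right; calc β y * α x = α x * β y := Nat.mul_comm _ _
      _ ≤ β x * α y := h
      _ = α y * β x := Nat.mul_comm _ _

lemma rr_trans {α β : X → ℕ} {x y z : X} (hy : 0 < α y + β y)
    (h1 : rr α β x y) (h2 : rr α β y z) : rr α β x z := by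
  unfold rr at *
  rcases Nat.eq_zero_or_pos (α y) with hαy | hαy
  · rcases Nat.eq_zero_or_pos (β y) with hβy | hβy
    · omega
    · -- α y = 0, β y > 0 : from h2, α z = 0
      have : α z = 0 := by
        have := h2
        rw [hαy] at this
        simp at this
        omega
      simp [this]
  · rcases Nat.eq_zero_or_pos (β y) with hβy | hβy
    · -- β y = 0, α y > 0 : from h1, β x = 0
      have : β x = 0 := by
        have := h1
        rw [hβy] at this
        simp at this
        omega
      simp [this]
    · have key : (β x * α z) * (α y * β y) ≤ (α x * β z) * (α y * β y) := by
        calc (β x * α z) * (α y * β y) = (β x * α y) * (β y * α z) := by ring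
          _ ≤ (α x * β y) * (α y * β z) := Nat.mul_le_mul h1 h2
          _ = (α x * β z) * (α y * β y) := by ring
      exact Nat.le_of_mul_le_mul_right key (Nat.mul_pos hαy hβy)

lemma exists_min (α β : X → ℕ) : ∀ (l : List X), l ≠ [] → (∀ x ∈ l, 0 < α x + β x) →
    ∃ m ∈ l, ∀ x ∈ l, rr α β m x := by
  intro l
  induction l with
  | nil => intro h; exact absurd rfl h
  | cons h t ih =>
    intro _ hpos
    rcases eq_or_ne t [] with rfl | ht
    · exact ⟨h, List.mem_cons_self, by
        intro x hx
        rw [List.mem_singleton] at hx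
        subst hx
        exact rr_refl _ _ _⟩
    · obtain ⟨m', hm', hmin⟩ := ih ht (fun x hx => hpos x (List.mem_cons_of_mem _ hx))
      rcases rr_total α β h m' with hr | hr
      · refine ⟨h, List.mem_cons_self, fun x hx => ?_⟩
        rcases List.mem_cons.1 hx with rfl | hx
        · exact rr_refl _ _ _
        · exact rr_trans (hpos m' (List.mem_cons_of_mem _ hm')) hr (hmin x hx)
      · refine ⟨m', List.mem_cons_of_mem _ hm', fun x hx => ?_⟩
        rcases List.mem_cons.1 hx with rfl | hx
        · exact hr
        · exact hmin x hx

lemma exists_sorted (α β : X → ℕ) : ∀ (n : ℕ) (l : List X), l.length = n →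
    (∀ x ∈ l, 0 < α x + β x) → ∃ l', l.Perm l' ∧ l'.Pairwise (rr α β) := by
  intro n
  induction n using Nat.strong_induction_on with
  | _ n ih =>
  intro l hlen hpos
  rcases eq_or_ne l [] with rfl | hl
  · exact ⟨[], List.Perm.refl _, List.Pairwise.nil⟩
  · obtain ⟨m, hm, hmin⟩ := exists_min α β l hl hpos
    have hperm : l.Perm (m :: l.erase m) := List.perm_cons_erase hm
    have hlenerase : (l.erase m).length < n := by
      rw [← hlen, List.length_erase_of_mem hm]
      have : 0 < l.length := List.length_pos_iff.2 hl
      omega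
    obtain ⟨t', hpt, hsort⟩ := ih _ hlenerase (l.erase m) rfl
      (fun x hx => hpos x (List.mem_of_mem_erase hx))
    refine ⟨m :: t', hperm.trans (List.Perm.cons m hpt), List.Pairwise.cons ?_ hsort⟩
    intro x hx
    exact hmin x (List.mem_of_mem_erase (hpt.symm.subset hx))

lemma split_prefix (α : X → ℕ) : ∀ (l : List X) (c : ℕ), 0 < c →
    c ≤ 4 * (l.map α).sum →
    ∃ u m v, l = u ++ m :: v ∧ 4 * (u.map α).sum < c ∧ c ≤ 4 * (u.map α).sum + 4 * α m := by
  intro l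
  induction l with
  | nil => intro c hc h; simp at h; omega
  | cons h t ih =>
    intro c hc hsum
    by_cases hcase : c ≤ 4 * α h
    · exact ⟨[], h, t, rfl, by simpa using hc, by simpa using hcase⟩
    · push_neg at hcase
      simp only [List.map_cons, List.sum_cons, Nat.mul_add] at hsum
      obtain ⟨u, m, v, heq, h1, h2⟩ := ih (c - 4 * α h) (by omega) (by omega)
      exact ⟨h :: u, m, v, by rw [heq]; rfl, by simp [Nat.mul_add]; omega,
        by simp [Nat.mul_add]; omega⟩

lemma pooled_single {α β : X → ℕ} {x : X} : ∀ (rest : List X),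
    (∀ j ∈ rest, rr α β x j) → β x * (rest.map α).sum ≤ α x * (rest.map β).sum := by
  intro rest
  induction rest with
  | nil => simp
  | cons h t ih =>
    intro hj
    simp only [List.map_cons, List.sum_cons, Nat.mul_add]
    exact Nat.add_le_add (hj h (List.mem_cons_self)) (ih fun j hjt => hj j (List.mem_cons_of_mem _ hjt))

lemma pooled {α β : X → ℕ} : ∀ (u rest : List X),
    (∀ i ∈ u, ∀ j ∈ rest, rr α β i j) →
    (u.map β).sum * (rest.map α).sum ≤ (u.map α).sum * (rest.map β).sum := by
  intro u rest
  induction u with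
  | nil => simp
  | cons h t ih =>
    intro hij
    simp only [List.map_cons, List.sum_cons, Nat.add_mul]
    exact Nat.add_le_add (pooled_single rest (hij h (List.mem_cons_self)))
      (ih fun i hi j hj => hij i (List.mem_cons_of_mem _ hi) j hj)


lemma greedy (𝒦 : Finset X) (α β : X → ℕ) (a b : ℕ) (ha : 0 < a) (hb : 0 < b)
    (hpos : ∀ P ∈ 𝒦, 0 < α P + β P)
    (hsmall : ∀ P ∈ 𝒦, 4 * α P < a ∧ 4 * β P < b)
    (hA : 3 * a ≤ 4 * 𝒦.sum α) (hB : 3 * b ≤ 4 * 𝒦.sum β) :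
    ∃ S ⊆ 𝒦, a ≤ 4 * S.sum α ∧ b ≤ 4 * (𝒦 \ S).sum β := by
  classical
  set A' := 𝒦.sum α with hA'
  set B' := 𝒦.sum β with hB'
  have hApos : 0 < A' := by omega
  have hBpos : 0 < B' := by omega
  obtain ⟨l', hperm, hsort⟩ := exists_sorted α β _ 𝒦.toList rfl
    (fun x hx => hpos x (Finset.mem_toList.1 hx))
  have hmem : ∀ x ∈ l', x ∈ 𝒦 := fun x hx => Finset.mem_toList.1 (hperm.symm.subset hx)
  have hsumα : (l'.map α).sum = A' := by
    rw [← (hperm.map α).sum_eq]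
    exact Finset.sum_map_toList 𝒦 α
  have hsumβ : (l'.map β).sum = B' := by
    rw [← (hperm.map β).sum_eq]
    exact Finset.sum_map_toList 𝒦 β
  obtain ⟨u, m, v, heq, hu1, hu2⟩ := split_prefix α l' a ha (by omega)
  have hnodup : l'.Nodup := hperm.nodup_iff.1 (Finset.nodup_toList _)
  have hndS : (u ++ [m]).Nodup := by
    have he2 : u ++ [m] ++ v = l' := by rw [heq]; simp
    have : (u ++ [m]).Sublist l' := he2 ▸ List.sublist_append_left _ _
    exact this.nodup hnodup
  set S := (u ++ [m]).toFinset with hS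
  have hSsub : S ⊆ 𝒦 := by
    intro x hx
    rw [hS, List.mem_toFinset] at hx
    refine hmem x ?_
    rw [heq]
    rcases List.mem_append.1 hx with hx | hx
    · exact List.mem_append_left _ hx
    · rw [List.mem_singleton] at hx
      subst hx
      exact List.mem_append_right _ (List.mem_cons_self)
  have hSα : S.sum α = (u.map α).sum + α m := by
    rw [hS, List.sum_toFinset _ hndS]
    simp
  have hSβ : S.sum β = (u.map β).sum + β m := by
    rw [hS, List.sum_toFinset _ hndS]
    simp
  have hmK : m ∈ 𝒦 := hmem m (by rw [heq]; exact List.mem_append_right _ (List.mem_cons_self))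
  -- pooled inequality
  have hpool : (u.map β).sum * A' ≤ (u.map α).sum * B' := by
    have hpw : ∀ i ∈ u, ∀ j ∈ (m :: v), rr α β i j := by
      have := hsort
      rw [heq, List.pairwise_append] at this
      exact this.2.2
    have h0 := pooled u (m :: v) hpw
    have hα : (u.map α).sum + ((m :: v).map α).sum = A' := by
      rw [← hsumα, heq]; simp
    have hβ : (u.map β).sum + ((m :: v).map β).sum = B' := by
      rw [← hsumβ, heq]; simp
    calc (u.map β).sum * A' = (u.map β).sum * (u.map α).sum
          + (u.map β).sum * ((m :: v).map α).sum := by rw [← hα]; ring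
      _ ≤ (u.map β).sum * (u.map α).sum + (u.map α).sum * ((m :: v).map β).sum :=
          Nat.add_le_add_left h0 _
      _ = (u.map α).sum * B' := by rw [← hβ]; ring
  -- main numeric estimate
  have hkey : (4 * S.sum β + b) * A' < 4 * B' * A' := by
    have e1 : 4 * (u.map β).sum * A' ≤ 4 * (u.map α).sum * B' := by nlinarith [hpool]
    have e2 : 4 * (u.map α).sum * B' < a * B' := Nat.mul_lt_mul_of_lt_of_le hu1 le_rfl hBpos
    have e3 : 4 * β m * A' < b * A' := Nat.mul_lt_mul_of_lt_of_le (hsmall m hmK).2 le_rfl hApos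
    have e4 : a * B' + 2 * (b * A') ≤ 4 * A' * B' := by nlinarith [hA, hB]
    rw [hSβ]
    nlinarith
  have hfin : 4 * S.sum β + b ≤ 4 * B' := le_of_lt (Nat.lt_of_mul_lt_mul_right hkey)
  have hsdiff : (𝒦 \ S).sum β + S.sum β = B' := Finset.sum_sdiff hSsub
  exact ⟨S, hSsub, by rw [hSα]; omega, by omega⟩

lemma collection (𝒦 : Finset X) (α β : X → ℕ) (a b : ℕ) (ha : 0 < a) (hb : 0 < b)
    (hpos : ∀ P ∈ 𝒦, 0 < α P + β P)
    (hA : 3 * a ≤ 4 * 𝒦.sum α) (hB : 3 * b ≤ 4 * 𝒦.sum β)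
    (nowin : ∀ S ⊆ 𝒦, a ≤ 4 * S.sum α → b ≤ 4 * (𝒦 \ S).sum β → False) :
    ∃ C ∈ 𝒦, 4 * 𝒦.sum α < 4 * α C + a ∧ 4 * 𝒦.sum β < 4 * β C + b := by
  classical
  set A' := 𝒦.sum α with hA'
  set B' := 𝒦.sum β with hB'
  by_contra hbig
  push_neg at hbig
  -- every part is small
  have hsmall : ∀ P ∈ 𝒦, 4 * α P < a ∧ 4 * β P < b := by
    intro P hP
    have hsum1 : (𝒦.erase P).sum α + α P = A' := Finset.sum_erase_add _ _ hP
    have hsum2 : (𝒦.erase P).sum β + β P = B' := Finset.sum_erase_add _ _ hP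
    have hdd : 𝒦 \ (𝒦.erase P) = {P} := by
      ext z
      simp only [Finset.mem_sdiff, Finset.mem_erase, Finset.mem_singleton]
      constructor
      · rintro ⟨hz, h⟩
        by_contra hne
        exact h ⟨hne, hz⟩
      · rintro rfl
        exact ⟨hP, fun h => h.1 rfl⟩
    have hdd2 : (𝒦 \ {P}).sum β + β P = B' := by
      have : ({P} : Finset X) ⊆ 𝒦 := Finset.singleton_subset_iff.2 hP
      have := Finset.sum_sdiff (f := β) this
      simpa using this
    have d1 : ¬(a ≤ 4 * (𝒦.erase P).sum α ∧ b ≤ 4 * ({P} : Finset X).sum β) := by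
      intro ⟨h1, h2⟩
      exact nowin (𝒦.erase P) (Finset.erase_subset _ _) h1 (by rw [hdd]; exact h2)
    have d2 : ¬(a ≤ 4 * ({P} : Finset X).sum α ∧ b ≤ 4 * (𝒦 \ {P}).sum β) := by
      intro ⟨h1, h2⟩
      exact nowin {P} (Finset.singleton_subset_iff.2 hP) h1 h2
    simp only [Finset.sum_singleton, not_and, not_le] at d1 d2
    have hnb := hbig P hP
    -- combine
    by_cases c1 : a ≤ 4 * (𝒦.erase P).sum α
    · have e1 : 4 * β P < b := d1 c1
      by_cases c2 : a ≤ 4 * α P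
      · omega
      · push_neg at c2; exact ⟨c2, e1⟩
    · push_neg at c1
      by_cases c2 : a ≤ 4 * α P
      · have e2 : 4 * B' < 4 * β P + b := by
          have := d2 c2
          omega
        omega
      · push_neg at c2
        refine ⟨c2, ?_⟩
        by_cases c3 : b ≤ 4 * β P
        · have e2 : 4 * B' < 4 * β P + b := by
            have := d2 (by omega)
            omega
          omega
        · omega
  obtain ⟨S, hSsub, h1, h2⟩ := greedy 𝒦 α β a b ha hb hpos hsmall hA hB
  exact nowin S hSsub h1 h2


end Generic

lemma NAdj.symm {G : SimpleGraph V} {X Y : Finset V} (h : NAdj G X Y) : NAdj G Y X :=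
  fun y hy x hx hadj => h x hx y hy hadj.symm

lemma NAdj.mono_right {G : SimpleGraph V} {X Y Y' : Finset V} (h : NAdj G X Y)
    (h' : Y' ⊆ Y) : NAdj G X Y' := fun x hx y hy => h x hx y (h' hy)

/-- a valid family of banked blobs: nonempty, pairwise disjoint and non-adjacent,
disjoint from and non-adjacent to the window `W`. -/
def Fam (G : SimpleGraph V) (W : Finset V) (𝒜 : Finset (Finset V)) : Prop :=
  (∀ P ∈ 𝒜, P.Nonempty) ∧
  (∀ P ∈ 𝒜, ∀ Q ∈ 𝒜, P ≠ Q → Disjoint P Q ∧ NAdj G P Q) ∧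
  (∀ P ∈ 𝒜, Disjoint P W ∧ NAdj G P W)

/-- full invariant state. -/
structure St (G : SimpleGraph V) (A B : Finset V) (𝒜 ℬ : Finset (Finset V))
    (W : Finset V) : Prop where
  cover : W ∪ 𝒜.biUnion id ∪ ℬ.biUnion id = A ∪ B
  famA : Fam G W 𝒜
  famB : Fam Gᶜ W ℬ
  disjAB : ∀ P ∈ 𝒜, ∀ Q ∈ ℬ, Disjoint P Q
  smallA : ∀ P ∈ 𝒜, 4 * (P ∩ A).card ≤ A.card ∧ 4 * (P ∩ B).card ≤ B.card
  smallB : ∀ P ∈ ℬ, 4 * (P ∩ A).card ≤ A.card ∧ 4 * (P ∩ B).card ≤ B.card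
  resA1 : 4 * (𝒜.sum fun P => (P ∩ A).card) ≤ A.card
  resA2 : 4 * (𝒜.sum fun P => (P ∩ B).card) ≤ B.card
  resB1 : 4 * (ℬ.sum fun P => (P ∩ A).card) ≤ A.card
  resB2 : 4 * (ℬ.sum fun P => (P ∩ B).card) ≤ B.card

def Concl (G : SimpleGraph V) (A B : Finset V) : Prop :=
  ∃ X Y : Finset V, X ⊆ A ∧ Y ⊆ B ∧ A.card ≤ 4 * X.card ∧ B.card ≤ 4 * Y.card ∧
    (NAdj G X Y ∨ NAdj Gᶜ X Y)

lemma St.compl {G : SimpleGraph V} {A B W : Finset V} {𝒜 ℬ : Finset (Finset V)}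
    (h : St G A B 𝒜 ℬ W) : St Gᶜ A B ℬ 𝒜 W where
  cover := by rw [Finset.union_right_comm]; exact h.cover
  famA := h.famB
  famB := by rw [compl_compl]; exact h.famA
  disjAB := fun P hP Q hQ => (h.disjAB Q hQ P hP).symm
  smallA := h.smallB
  smallB := h.smallA
  resA1 := h.resB1
  resA2 := h.resB2
  resB1 := h.resA1
  resB2 := h.resA2

lemma St.ofCompl {G : SimpleGraph V} {A B W : Finset V} {𝒜 ℬ : Finset (Finset V)}
    (h : St Gᶜ A B 𝒜 ℬ W) : St G A B ℬ 𝒜 W := by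
  have := h.compl
  rwa [compl_compl] at this

lemma Concl.ofCompl {G : SimpleGraph V} {A B : Finset V} (h : Concl Gᶜ A B) :
    Concl G A B := by
  obtain ⟨X, Y, h1, h2, h3, h4, h5⟩ := h
  rw [compl_compl] at h5
  exact ⟨X, Y, h1, h2, h3, h4, h5.symm⟩

/-- counting: the `T`-masses of the window and the blobs add up to `|T|`. -/
lemma card_parts {G : SimpleGraph V} {A B W : Finset V} {𝒜 ℬ : Finset (Finset V)}
    (h : St G A B 𝒜 ℬ W) {T : Finset V} (hT : T ⊆ A ∪ B) :
    (W ∩ T).card + (𝒜.sum fun P => (P ∩ T).card) + (ℬ.sum fun P => (P ∩ T).card)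
      = T.card := by
  classical
  have hbUA : (𝒜.biUnion fun P => P ∩ T) = (𝒜.biUnion id) ∩ T := by
    ext z; simp [Finset.mem_biUnion]; tauto
  have hbUB : (ℬ.biUnion fun P => P ∩ T) = (ℬ.biUnion id) ∩ T := by
    ext z; simp [Finset.mem_biUnion]; tauto
  have hU : (W ∩ T) ∪ (𝒜.biUnion fun P => P ∩ T) ∪ (ℬ.biUnion fun P => P ∩ T) = T := by
    rw [hbUA, hbUB, ← Finset.union_inter_distrib_right, ← Finset.union_inter_distrib_right,
      h.cover]
    exact Finset.inter_eq_right.2 hT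
  have hd1 : ∀ P ∈ 𝒜, ∀ Q ∈ 𝒜, P ≠ Q → Disjoint (P ∩ T) (Q ∩ T) := fun P hP Q hQ hne =>
    Finset.disjoint_left.2 fun z hz hz' => (Finset.disjoint_left.1 ((h.famA.2.1 P hP Q hQ hne).1)
      (Finset.mem_inter.1 hz).1) (Finset.mem_inter.1 hz').1
  have hd2 : ∀ P ∈ ℬ, ∀ Q ∈ ℬ, P ≠ Q → Disjoint (P ∩ T) (Q ∩ T) := fun P hP Q hQ hne =>
    Finset.disjoint_left.2 fun z hz hz' => (Finset.disjoint_left.1 ((h.famB.2.1 P hP Q hQ hne).1)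
      (Finset.mem_inter.1 hz).1) (Finset.mem_inter.1 hz').1
  have c1 : ((𝒜.biUnion fun P => P ∩ T)).card = 𝒜.sum fun P => (P ∩ T).card :=
    Finset.card_biUnion hd1
  have c2 : ((ℬ.biUnion fun P => P ∩ T)).card = ℬ.sum fun P => (P ∩ T).card :=
    Finset.card_biUnion hd2
  have hdisj1 : Disjoint (W ∩ T) (𝒜.biUnion fun P => P ∩ T) := by
    rw [Finset.disjoint_left]
    intro z hz hz'
    obtain ⟨P, hP, hzP⟩ := Finset.mem_biUnion.1 hz'
    exact (Finset.disjoint_left.1 (h.famA.2.2 P hP).1) (Finset.mem_inter.1 hzP).1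
      (Finset.mem_inter.1 hz).1
  have hdisj2 : Disjoint ((W ∩ T) ∪ (𝒜.biUnion fun P => P ∩ T))
      (ℬ.biUnion fun P => P ∩ T) := by
    rw [Finset.disjoint_left]
    intro z hz hz'
    obtain ⟨Q, hQ, hzQ⟩ := Finset.mem_biUnion.1 hz'
    rcases Finset.mem_union.1 hz with hz | hz
    · exact (Finset.disjoint_left.1 (h.famB.2.2 Q hQ).1) (Finset.mem_inter.1 hzQ).1
        (Finset.mem_inter.1 hz).1
    · obtain ⟨P, hP, hzP⟩ := Finset.mem_biUnion.1 hz
      exact (Finset.disjoint_left.1 (h.disjAB P hP Q hQ)) (Finset.mem_inter.1 hzP).1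
        (Finset.mem_inter.1 hzQ).1
  calc (W ∩ T).card + (𝒜.sum fun P => (P ∩ T).card) + (ℬ.sum fun P => (P ∩ T).card)
      = ((W ∩ T) ∪ (𝒜.biUnion fun P => P ∩ T)).card + (ℬ.biUnion fun P => P ∩ T).card := by
        rw [Finset.card_union_of_disjoint hdisj1, c1, c2]
    _ = (((W ∩ T) ∪ (𝒜.biUnion fun P => P ∩ T)) ∪ (ℬ.biUnion fun P => P ∩ T)).card := by
        rw [Finset.card_union_of_disjoint hdisj2]
    _ = T.card := by rw [hU]


/- ===== the descent step ===== -/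
lemma step (G : SimpleGraph V) (A B : Finset V) (𝒜 ℬ : Finset (Finset V)) (W : Finset V)
    (hSt : St G A B 𝒜 ℬ W) (ha : 0 < A.card) (hb : 0 < B.card)
    (hd : Disc G W)
    (ih : ∀ W' : Finset V, W'.card < W.card → ∀ 𝒜' ℬ' : Finset (Finset V),
        St G A B 𝒜' ℬ' W' → Concl G A B) :
    Concl G A B := by
  classical
  set a := A.card with haA
  set b := B.card with hbB
  set αf : Finset V → ℕ := fun P => (P ∩ A).card with hαf
  set βf : Finset V → ℕ := fun P => (P ∩ B).card with hβf
  -- the components of the window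
  set comps := W.image (fun x => cmp G W x) with hcomps
  have hcsub : ∀ C ∈ comps, C ⊆ W := by
    intro C hC
    obtain ⟨x, _, rfl⟩ := Finset.mem_image.1 hC
    exact cmp_subset
  have hcne : ∀ C ∈ comps, C.Nonempty := by
    intro C hC
    obtain ⟨x, hx, rfl⟩ := Finset.mem_image.1 hC
    exact ⟨x, mem_cmp_self hx⟩
  have hWsub : W ⊆ A ∪ B := by
    intro z hz
    rw [← hSt.cover]
    exact mem_union_left _ (mem_union_left _ hz)
  have hblobsubA : ∀ P ∈ 𝒜, P ⊆ A ∪ B := by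
    intro P hP z hz
    rw [← hSt.cover]
    exact mem_union_left _ (mem_union_right _ (Finset.mem_biUnion.2 ⟨P, hP, hz⟩))
  have hcd : ∀ C ∈ comps, ∀ C' ∈ comps, C ≠ C' → Disjoint C C' ∧ NAdj G C C' := by
    intro C hC C' hC' hne
    obtain ⟨x, hx, rfl⟩ := Finset.mem_image.1 hC
    obtain ⟨y, hy, rfl⟩ := Finset.mem_image.1 hC'
    constructor
    · rw [Finset.disjoint_left]
      intro z hz hz'
      exact hne ((cmp_eq_of_mem hz).symm.trans (cmp_eq_of_mem hz'))
    · intro u hu v hv hadj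
      have hvW : v ∈ W := cmp_subset hv
      have : v ∈ cmp G W x := adj_mem_cmp hu hvW hadj
      exact hne ((cmp_eq_of_mem this).symm.trans (cmp_eq_of_mem hv))
  set K := 𝒜 ∪ comps with hK
  have h𝒜c : Disjoint 𝒜 comps := by
    rw [Finset.disjoint_left]
    intro P hP hPc
    obtain ⟨z, hz⟩ := hcne P hPc
    exact (Finset.disjoint_left.1 (hSt.famA.2.2 P hP).1) hz (hcsub P hPc hz)
  have hKdisj : ∀ P ∈ K, ∀ Q ∈ K, P ≠ Q → Disjoint P Q := by
    intro P hP Q hQ hne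
    rcases Finset.mem_union.1 hP with hP | hP <;> rcases Finset.mem_union.1 hQ with hQ | hQ
    · exact (hSt.famA.2.1 P hP Q hQ hne).1
    · exact ((hSt.famA.2.2 P hP).1).mono_right (hcsub Q hQ)
    · exact (((hSt.famA.2.2 Q hQ).1).mono_right (hcsub P hP)).symm
    · exact (hcd P hP Q hQ hne).1
  have hKnadj : ∀ P ∈ K, ∀ Q ∈ K, P ≠ Q → NAdj G P Q := by
    intro P hP Q hQ hne
    rcases Finset.mem_union.1 hP with hP | hP <;> rcases Finset.mem_union.1 hQ with hQ | hQ
    · exact (hSt.famA.2.1 P hP Q hQ hne).2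
    · exact ((hSt.famA.2.2 P hP).2).mono_right (hcsub Q hQ)
    · exact NAdj.symm (((hSt.famA.2.2 Q hQ).2).mono_right (hcsub P hP))
    · exact (hcd P hP Q hQ hne).2
  -- sums over the components
  have hsumsW : ∀ T : Finset V, (comps.sum fun P => (P ∩ T).card) = (W ∩ T).card := by
    intro T
    have hbU : (comps.biUnion fun P => P ∩ T) = W ∩ T := by
      ext z
      simp only [Finset.mem_biUnion, Finset.mem_inter]
      constructor
      · rintro ⟨P, hP, hzP, hzT⟩
        exact ⟨hcsub P hP hzP, hzT⟩
      · rintro ⟨hzW, hzT⟩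
        exact ⟨cmp G W z, Finset.mem_image.2 ⟨z, hzW, rfl⟩, mem_cmp_self hzW, hzT⟩
    rw [← hbU, Finset.card_biUnion]
    intro P hP Q hQ hne
    rw [Function.onFun, Finset.disjoint_left]
    intro z hz hz'
    exact (Finset.disjoint_left.1 ((hcd P hP Q hQ hne).1)) (Finset.mem_inter.1 hz).1
      (Finset.mem_inter.1 hz').1
  have hKsumA : K.sum αf = (𝒜.sum αf) + (W ∩ A).card := by
    rw [hK, Finset.sum_union h𝒜c, hsumsW A]
  have hKsumB : K.sum βf = (𝒜.sum βf) + (W ∩ B).card := by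
    rw [hK, Finset.sum_union h𝒜c, hsumsW B]
  have hcpA := card_parts hSt (Finset.subset_union_left (s₁ := A) (s₂ := B))
  have hcpB := card_parts hSt (Finset.subset_union_right (s₁ := A) (s₂ := B))
  have brA : 𝒜.sum αf = ∑ P ∈ 𝒜, (P ∩ A).card := rfl
  have brB : 𝒜.sum βf = ∑ P ∈ 𝒜, (P ∩ B).card := rfl
  have hA' : 3 * a ≤ 4 * K.sum αf := by
    have := hSt.resB1
    rw [hKsumA]
    omega
  have hB' : 3 * b ≤ 4 * K.sum βf := by
    have := hSt.resB2
    rw [hKsumB]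
    omega
  have hpos : ∀ P ∈ K, 0 < αf P + βf P := by
    intro P hP
    have hPsub : P ⊆ A ∪ B := by
      rcases Finset.mem_union.1 hP with hP | hP
      · exact hblobsubA P hP
      · exact (hcsub P hP).trans hWsub
    have hPne : P.Nonempty := by
      rcases Finset.mem_union.1 hP with hP | hP
      · exact hSt.famA.1 P hP
      · exact hcne P hP
    have : P = (P ∩ A) ∪ (P ∩ B) := by
      ext z
      simp only [Finset.mem_union, Finset.mem_inter]
      constructor
      · intro hz
        rcases Finset.mem_union.1 (hPsub hz) with h | h
        · exact Or.inl ⟨hz, h⟩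
        · exact Or.inr ⟨hz, h⟩
      · rintro (⟨h, _⟩ | ⟨h, _⟩) <;> exact h
    have hle : P.card ≤ αf P + βf P := by
      conv_lhs => rw [this]
      exact Finset.card_union_le _ _
    have := Finset.card_pos.2 hPne
    omega
  by_cases hwin : ∃ S ⊆ K, a ≤ 4 * S.sum αf ∧ b ≤ 4 * (K \ S).sum βf
  · -- direct win
    obtain ⟨S, hSsub, h1, h2⟩ := hwin
    refine ⟨S.biUnion fun P => P ∩ A, (K \ S).biUnion fun P => P ∩ B, ?_, ?_, ?_, ?_, Or.inl ?_⟩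
    · intro z hz
      obtain ⟨P, _, hzP⟩ := Finset.mem_biUnion.1 hz
      exact (Finset.mem_inter.1 hzP).2
    · intro z hz
      obtain ⟨P, _, hzP⟩ := Finset.mem_biUnion.1 hz
      exact (Finset.mem_inter.1 hzP).2
    · rw [Finset.card_biUnion]
      · exact h1
      · intro P hP Q hQ hne
        rw [Function.onFun, Finset.disjoint_left]
        intro z hz hz'
        exact (Finset.disjoint_left.1 (hKdisj P (hSsub hP) Q (hSsub hQ) hne))
          (Finset.mem_inter.1 hz).1 (Finset.mem_inter.1 hz').1
    · rw [Finset.card_biUnion]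
      · exact h2
      · intro P hP Q hQ hne
        rw [Function.onFun, Finset.disjoint_left]
        intro z hz hz'
        exact (Finset.disjoint_left.1 (hKdisj P (Finset.mem_sdiff.1 hP).1 Q
          (Finset.mem_sdiff.1 hQ).1 hne)) (Finset.mem_inter.1 hz).1 (Finset.mem_inter.1 hz').1
    · intro x hx y hy
      obtain ⟨P, hP, hxP⟩ := Finset.mem_biUnion.1 hx
      obtain ⟨Q, hQ, hyQ⟩ := Finset.mem_biUnion.1 hy
      have hPQ : P ≠ Q := by
        rintro rfl
        exact (Finset.mem_sdiff.1 hQ).2 hP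
      exact hKnadj P (hSsub hP) Q (Finset.mem_sdiff.1 hQ).1 hPQ x
        (Finset.mem_inter.1 hxP).1 y (Finset.mem_inter.1 hyQ).1
  · -- no direct win: find the big component and descend
    have nowin : ∀ S ⊆ K, a ≤ 4 * S.sum αf → b ≤ 4 * (K \ S).sum βf → False :=
      fun S hS h1 h2 => hwin ⟨S, hS, h1, h2⟩
    obtain ⟨C, hCK, hbig1, hbig2⟩ := collection K αf βf a b ha hb hpos hA' hB' nowin
    have brC1 : αf C = (C ∩ A).card := rfl
    have brC2 : βf C = (C ∩ B).card := rfl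
    have hA'' := hA'
    have hB'' := hB'
    rw [hKsumA] at hbig1 hA''
    rw [hKsumB] at hbig2 hB''
    have hC𝒜 : C ∉ 𝒜 := by
      intro hC
      have := (hSt.smallA C hC).1
      omega
    have hCcomps : C ∈ comps := (Finset.mem_union.1 hCK).resolve_left hC𝒜
    obtain ⟨x₀, hx₀, hCeq⟩ := Finset.mem_image.1 hCcomps
    have hCsubW : C ⊆ W := hcsub C hCcomps
    -- W \ C is nonempty
    obtain ⟨x, hx, y, hy, hnr⟩ := hd.exists_not_rel
    have hWC : ¬ W ⊆ C := by
      intro hsub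
      have hxC := hsub hx
      have hyC := hsub hy
      rw [← hCeq] at hxC hyC
      exact hnr (Rel.trans (Rel.symm (mem_cmp_iff.1 hxC).2) (mem_cmp_iff.1 hyC).2)
    have hD : ∃ w0 ∈ W, w0 ∉ C := by
      by_contra hcon
      push_neg at hcon
      exact hWC hcon
    obtain ⟨w0, hw0W, hw0C⟩ := hD
    set D := W \ C with hDdef
    have hDne : D.Nonempty := ⟨w0, Finset.mem_sdiff.2 ⟨hw0W, hw0C⟩⟩
    have hDsubW : D ⊆ W := Finset.sdiff_subset
    have hcardlt : C.card < W.card :=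
      Finset.card_lt_card ⟨hCsubW, fun h => hw0C (h hw0W)⟩
    -- mass splitting
    have hsplit : ∀ T : Finset V, (C ∩ T).card + (D ∩ T).card = (W ∩ T).card := by
      intro T
      rw [← Finset.card_union_of_disjoint]
      · congr 1
        ext z
        simp only [Finset.mem_union, Finset.mem_inter, hDdef, Finset.mem_sdiff]
        constructor
        · rintro (⟨h1, h2⟩ | ⟨⟨h1, _⟩, h2⟩) <;> exact ⟨by first | exact hCsubW h1 | exact h1, h2⟩
        · rintro ⟨h1, h2⟩
          by_cases hzC : z ∈ C
          · exact Or.inl ⟨hzC, h2⟩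
          · exact Or.inr ⟨⟨h1, hzC⟩, h2⟩
      · rw [Finset.disjoint_left]
        intro z hz hz'
        exact (Finset.mem_sdiff.1 (Finset.mem_inter.1 hz').1).2 (Finset.mem_inter.1 hz).1
    have brD1 : αf D = (D ∩ A).card := rfl
    have brD2 : βf D = (D ∩ B).card := rfl
    have hnewA : 4 * αf D + 4 * 𝒜.sum αf < a := by
      have := hsplit A
      omega
    have hnewB : 4 * βf D + 4 * 𝒜.sum βf < b := by
      have := hsplit B
      omega
    have hD𝒜 : D ∉ 𝒜 := by
      intro hDA
      obtain ⟨z, hz⟩ := hDne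
      exact (Finset.disjoint_left.1 (hSt.famA.2.2 D hDA).1) hz (hDsubW hz)
    have hnadjDC : NAdj G D C := by
      intro u hu v hv hadj
      have huW : u ∈ W := hDsubW hu
      rw [← hCeq] at hv
      have : u ∈ cmp G W x₀ := adj_mem_cmp hv huW hadj.symm
      rw [hCeq] at this
      exact (Finset.mem_sdiff.1 hu).2 this
    -- build the new state
    have hSt' : St G A B (insert D 𝒜) ℬ C := by
      constructor
      · rw [Finset.biUnion_insert]
        have : C ∪ (D ∪ 𝒜.biUnion id) = W ∪ 𝒜.biUnion id := by
          rw [← Finset.union_assoc, Finset.union_sdiff_of_subset hCsubW]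
        simp only [id] at this ⊢
        rw [this]
        exact hSt.cover
      · refine ⟨?_, ?_, ?_⟩
        · intro P hP
          rcases Finset.mem_insert.1 hP with rfl | hP
          · exact hDne
          · exact hSt.famA.1 P hP
        · intro P hP Q hQ hne
          rcases Finset.mem_insert.1 hP with rfl | hP <;>
            rcases Finset.mem_insert.1 hQ with rfl | hQ
          · exact absurd rfl hne
          · exact ⟨((hSt.famA.2.2 Q hQ).1.symm).mono_left hDsubW,
              NAdj.symm (((hSt.famA.2.2 Q hQ).2).mono_right hDsubW)⟩
          · exact ⟨((hSt.famA.2.2 P hP).1).mono_right hDsubW,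
              ((hSt.famA.2.2 P hP).2).mono_right hDsubW⟩
          · exact hSt.famA.2.1 P hP Q hQ hne
        · intro P hP
          rcases Finset.mem_insert.1 hP with rfl | hP
          · exact ⟨Finset.sdiff_disjoint, hnadjDC⟩
          · exact ⟨((hSt.famA.2.2 P hP).1).mono_right hCsubW,
              ((hSt.famA.2.2 P hP).2).mono_right hCsubW⟩
      · refine ⟨hSt.famB.1, hSt.famB.2.1, ?_⟩
        intro P hP
        exact ⟨((hSt.famB.2.2 P hP).1).mono_right hCsubW,
          ((hSt.famB.2.2 P hP).2).mono_right hCsubW⟩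
      · intro P hP Q hQ
        rcases Finset.mem_insert.1 hP with rfl | hP
        · exact ((hSt.famB.2.2 Q hQ).1.symm).mono_left hDsubW
        · exact hSt.disjAB P hP Q hQ
      · intro P hP
        rcases Finset.mem_insert.1 hP with rfl | hP
        · constructor <;> [skip; skip] <;> omega
        · exact hSt.smallA P hP
      · exact hSt.smallB
      · rw [Finset.sum_insert hD𝒜]
        omega
      · rw [Finset.sum_insert hD𝒜]
        omega
      · exact hSt.resB1
      · exact hSt.resB2
    exact ih C hcardlt (insert D 𝒜) ℬ hSt'


lemma Concl.compl {G : SimpleGraph V} {A B : Finset V} (h : Concl G A B) :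
    Concl Gᶜ A B := by
  obtain ⟨X, Y, h1, h2, h3, h4, h5⟩ := h
  refine ⟨X, Y, h1, h2, h3, h4, ?_⟩
  rw [compl_compl]
  exact h5.symm

theorem main (G : SimpleGraph V) (hG : IsCograph G) (A B : Finset V)
    (hAB : Disjoint A B) :
    ∀ (n : ℕ) (W : Finset V) (𝒜 ℬ : Finset (Finset V)), W.card = n →
      St G A B 𝒜 ℬ W → Concl G A B := by
  intro n
  induction n using Nat.strong_induction_on with
  | _ n ih =>
  intro W 𝒜 ℬ hn hSt
  by_cases haz : A.card = 0
  · exact ⟨∅, B, empty_subset _, subset_rfl, by omega, by omega,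
      Or.inl fun x hx => absurd hx (Finset.notMem_empty x)⟩
  by_cases hbz : B.card = 0
  · exact ⟨A, ∅, subset_rfl, empty_subset _, by omega, by omega,
      Or.inl fun x _ y hy => absurd hy (Finset.notMem_empty y)⟩
  have ha : 0 < A.card := Nat.pos_of_ne_zero haz
  have hb : 0 < B.card := Nat.pos_of_ne_zero hbz
  have hcpA := card_parts hSt (Finset.subset_union_left (s₁ := A) (s₂ := B))
  have hcpB := card_parts hSt (Finset.subset_union_right (s₁ := A) (s₂ := B))
  have hWA : 0 < (W ∩ A).card := by
    have h1 := hSt.resA1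
    have h2 := hSt.resB1
    omega
  have hWB : 0 < (W ∩ B).card := by
    have h1 := hSt.resA2
    have h2 := hSt.resB2
    omega
  have hW2 : 2 ≤ W.card := by
    have hsub : (W ∩ A) ∪ (W ∩ B) ⊆ W :=
      Finset.union_subset Finset.inter_subset_left Finset.inter_subset_left
    have hdisj : Disjoint (W ∩ A) (W ∩ B) :=
      hAB.mono Finset.inter_subset_right Finset.inter_subset_right
    have h1 := Finset.card_union_of_disjoint hdisj
    have h2 := Finset.card_le_card hsub
    omega
  rcases seinsche hG hW2 with hdisc | hdisc
  · exact step G A B 𝒜 ℬ W hSt ha hb hdisc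
      (fun W' hlt 𝒜' ℬ' hSt' => ih W'.card (hn ▸ hlt) W' 𝒜' ℬ' rfl hSt')
  · exact Concl.ofCompl (step Gᶜ A B ℬ 𝒜 W hSt.compl ha hb hdisc
      (fun W' hlt 𝒜' ℬ' hSt' =>
        Concl.compl (ih W'.card (hn ▸ hlt) W' ℬ' 𝒜' rfl hSt'.ofCompl)))


end Stmt11

/-- for a cograph `G` with vertex set split into `V₁` of size `⌈n/2⌉`
and `V₂ = V₁ᶜ` of size `⌊n/2⌋`, there are `U₁ ⊆ V₁`, `U₂ ⊆ V₁ᶜ` with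
`|Uᵢ| ≥ |Vᵢ|/4` such that all pairs across are adjacent, or none are. -/
theorem stmt_11 {V : Type*} [Fintype V] [DecidableEq V] (G : SimpleGraph V)
    (hG : IsCograph G) (V₁ : Finset V) (hcard : V₁.card = (Fintype.card V + 1) / 2) :
    ∃ U₁ U₂ : Finset V, U₁ ⊆ V₁ ∧ U₂ ⊆ V₁ᶜ ∧
      (V₁.card : ℝ) / 4 ≤ (U₁.card : ℝ) ∧ (V₁ᶜ.card : ℝ) / 4 ≤ (U₂.card : ℝ) ∧
      ((∀ u ∈ U₁, ∀ v ∈ U₂, G.Adj u v) ∨ (∀ u ∈ U₁, ∀ v ∈ U₂, ¬G.Adj u v)) := by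
  classical
  have hAB : Disjoint V₁ V₁ᶜ := disjoint_compl_right
  have hSt : Stmt11.St G V₁ V₁ᶜ ∅ ∅ (V₁ ∪ V₁ᶜ) := by
    constructor
    · simp
    · exact ⟨fun P hP => absurd hP (Finset.notMem_empty P),
        fun P hP => absurd hP (Finset.notMem_empty P),
        fun P hP => absurd hP (Finset.notMem_empty P)⟩
    · exact ⟨fun P hP => absurd hP (Finset.notMem_empty P),
        fun P hP => absurd hP (Finset.notMem_empty P),
        fun P hP => absurd hP (Finset.notMem_empty P)⟩
    · exact fun P hP => absurd hP (Finset.notMem_empty P)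
    · exact fun P hP => absurd hP (Finset.notMem_empty P)
    · exact fun P hP => absurd hP (Finset.notMem_empty P)
    · simp
    · simp
    · simp
    · simp
  obtain ⟨X, Y, h1, h2, h3, h4, h5⟩ :=
    Stmt11.main G hG V₁ V₁ᶜ hAB (V₁ ∪ V₁ᶜ).card (V₁ ∪ V₁ᶜ) ∅ ∅ rfl hSt
  refine ⟨X, Y, h1, h2, ?_, ?_, ?_⟩
  · rw [div_le_iff₀ (by norm_num : (0:ℝ) < 4)]
    exact_mod_cast (by omega : V₁.card ≤ X.card * 4)
  · rw [div_le_iff₀ (by norm_num : (0:ℝ) < 4)]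
    exact_mod_cast (by omega : V₁ᶜ.card ≤ Y.card * 4)
  · rcases h5 with h5 | h5
    · exact Or.inr fun u hu v hv => h5 u hu v hv
    · refine Or.inl fun u hu v hv => ?_
      have huv : u ≠ v := by
        rintro rfl
        exact (Finset.mem_compl.1 (h2 hv)) (h1 hu)
      have := h5 u hu v hv
      simp only [SimpleGraph.compl_adj, not_and, not_not] at this
      exact this huv
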